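/- arXiv:2010.07640 — 7 statements merged into one kernel-verified Lean document; each statement's English description precedes it below -/
import Mathlib

section
/- Let (σ, ε) be an admissible pair for a division ring K, let κ ∈ K \ {0}, and define ρ(t) = κ·σ(t)·κ⁻¹ and η = κ·σ(κ)⁻¹·ε. Then κ·K_{σ,ε} = K_{ρ,η}, i.e. {κ·(t − σ(t)·ε) : t ∈ K} = {u − ρ(u)·η : u ∈ K}. -/
/-- An anti-automorphism of a division ring `K`: an additive bijection `σ` with
`σ (s * t) = σ t * σ s` and `σ 1 = 1`. -/
def IsAntiAuto {K : Type*} [DivisionRing K] (σ : K → K) : Prop :=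
  Function.Bijective σ ∧ (∀ s t : K, σ (s + t) = σ s + σ t) ∧
    (∀ s t : K, σ (s * t) = σ t * σ s) ∧ σ 1 = 1

/-- An admissible pair `(σ, ε)` for a division ring `K`. -/
def IsAdmissiblePair {K : Type*} [DivisionRing K] (σ : K → K) (ε : K) : Prop :=
  IsAntiAuto σ ∧ ε ≠ 0 ∧ σ ε = ε⁻¹ ∧ ∀ t : K, σ (σ t) = ε * t * ε⁻¹

/-- For an admissible pair `(σ, ε)` and `κ ≠ 0`, with `ρ t = κ * σ t * κ⁻¹` and
`η = κ * (σ κ)⁻¹ * ε`, one has `κ · K_{σ,ε} = K_{ρ,η}`. -/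
theorem statement6 {K : Type*} [DivisionRing K] (σ : K → K) (ε : K)
    (h : IsAdmissiblePair σ ε) (κ : K) (hκ : κ ≠ 0) :
    {r : K | ∃ t : K, r = κ * (t - σ t * ε)} =
      {r : K | ∃ u : K, r = u - (κ * σ u * κ⁻¹) * (κ * (σ κ)⁻¹ * ε)} := by
  obtain ⟨⟨hbij, hadd, hmul, _⟩, _, _, _⟩ := h
  have h0 : σ 0 = 0 := by
    have := hadd 0 0
    simp at this
    linear_combination (norm := noncomm_ring) this
  have hσκ : σ κ ≠ 0 := fun hz => hκ (hbij.1 (by rw [hz, h0]))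
  have key : ∀ t : K, κ * (t - σ t * ε)
      = κ * t - (κ * σ (κ * t) * κ⁻¹) * (κ * (σ κ)⁻¹ * ε) := by
    intro t
    have this1 : κ * (σ t * σ κ) * κ⁻¹ * (κ * (σ κ)⁻¹ * ε) = κ * (σ t * ε) := by
      simp only [mul_assoc]
      rw [inv_mul_cancel_left₀ hκ, mul_inv_cancel_left₀ hσκ]
    rw [hmul, mul_sub, this1]
  ext r
  constructor
  · rintro ⟨t, rfl⟩
    exact ⟨κ * t, key t⟩
  · rintro ⟨u, rfl⟩
    refine ⟨κ⁻¹ * u, ?_⟩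
    rw [key, mul_inv_cancel_left₀ hκ]
end

section
/- Let (σ, ε) be an admissible pair for a division ring K. Then K_{σ,ε} = K if and only if σ = id_K, ε = −1 and the characteristic of K is different from 2 (in which case K is necessarily commutative). -/
/-- `K_{σ,ε} = K` if and only if `σ = id`, `ε = -1` and `char K ≠ 2`; in which
case `K` is necessarily commutative. -/
theorem statement7 {K : Type*} [DivisionRing K] (σ : K → K) (ε : K)
    (h : IsAdmissiblePair σ ε) :
    ({r : K | ∃ t : K, r = t - σ t * ε} = Set.univ ↔
      (σ = id ∧ ε = -1 ∧ ringChar K ≠ 2)) ∧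
    ({r : K | ∃ t : K, r = t - σ t * ε} = Set.univ → ∀ a b : K, a * b = b * a) := by
  obtain ⟨⟨hbij, hadd, hmul, hone⟩, hε0, hσε, hσσ⟩ := h
  have h0 : σ 0 = 0 := by
    have h00 := hadd 0 0
    simp only [add_zero] at h00
    exact (left_eq_add.mp h00)
  have hneg : ∀ x : K, σ (-x) = -σ x := by
    intro x
    have hx := hadd x (-x)
    simp only [add_neg_cancel, h0] at hx
    exact (eq_neg_of_add_eq_zero_right hx.symm)
  have hsub : ∀ s u : K, σ (s - u) = σ s - σ u := by
    intro s u
    rw [sub_eq_add_neg, hadd, hneg, sub_eq_add_neg]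
  have key : ({r : K | ∃ t : K, r = t - σ t * ε} = Set.univ) →
      σ = id ∧ ε = -1 ∧ ringChar K ≠ 2 := by
    intro hU
    have hall : ∀ x : K, σ x * ε = -x := by
      intro x
      have hx : x ∈ {r : K | ∃ t : K, r = t - σ t * ε} := hU ▸ Set.mem_univ x
      obtain ⟨t, rfl⟩ := hx
      rw [hsub, hmul, hσε, hσσ]
      have h1 : ε⁻¹ * (ε * t * ε⁻¹) = t * ε⁻¹ := by
        rw [mul_assoc ε t, ← mul_assoc ε⁻¹, inv_mul_cancel₀ hε0, one_mul]
      rw [h1, sub_mul, mul_assoc, inv_mul_cancel₀ hε0, mul_one, neg_sub]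
    have hεneg : ε = -1 := by
      have h1 := hall 1
      rw [hone, one_mul] at h1
      exact h1
    have hid : σ = id := by
      funext x
      have hx := hall x
      rw [hεneg, mul_neg_one, neg_inj] at hx
      exact hx
    refine ⟨hid, hεneg, ?_⟩
    intro h2
    have h2' : (2 : K) = 0 := by
      have := ringChar.charP K
      rw [h2] at this
      exact CharP.cast_eq_zero K 2
    have h1 : (1 : K) ∈ {r : K | ∃ t : K, r = t - σ t * ε} := hU ▸ Set.mem_univ 1
    obtain ⟨t, ht⟩ := h1
    rw [hid, hεneg] at ht
    simp only [id_eq, mul_neg_one, sub_neg_eq_add] at ht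
    rw [← two_mul, h2', zero_mul] at ht
    exact one_ne_zero ht
  constructor
  · constructor
    · exact key
    · rintro ⟨rfl, rfl, hchar⟩
      have h2 : (2 : K) ≠ 0 := Ring.two_ne_zero hchar
      ext r
      simp only [Set.mem_setOf_eq, Set.mem_univ, iff_true]
      refine ⟨2⁻¹ * r, ?_⟩
      simp only [id_eq, mul_neg_one, sub_neg_eq_add]
      rw [← two_mul, ← mul_assoc, mul_inv_cancel₀ h2, one_mul]
  · intro hU a b
    have hid := (key hU).1
    have hab := hmul a b
    rw [hid] at hab
    simpa using hab
end

section
/- Let (σ, ε) be an admissible pair for a division ring K and suppose K_{σ,ε} ≠ K. If f and g are (σ, ε)-sesquilinear forms on a right K-vector space V such that f(x, y) − g(x, y) ∈ K_{σ,ε} for all x, y ∈ V, then f = g. (In particular, the sesquilinearization of a pseudoquadratic form is uniquely determined when K_{σ,ε} ≠ K.) -/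
/-- A `(σ, ε)`-sesquilinear form on a right `K`-vector space `V`
(a right `K`-vector space is modelled as a module over `Kᵐᵒᵖ`;
the right scalar action `x · s` is `MulOpposite.op s • x`). -/
def IsSesquilinear {K V : Type*} [DivisionRing K] [AddCommGroup V] [Module Kᵐᵒᵖ V]
    (σ : K → K) (ε : K) (f : V → V → K) : Prop :=
  (∀ x y z : V, f (x + y) z = f x z + f y z) ∧
  (∀ x y z : V, f x (y + z) = f x y + f x z) ∧
  (∀ (x y : V) (s : K), f x (MulOpposite.op s • y) = f x y * s) ∧
  ∀ x y : V, f y x = σ (f x y) * ε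

/-- If `K_{σ,ε} ≠ K` and two `(σ, ε)`-sesquilinear forms `f`, `g` satisfy
`f x y - g x y ∈ K_{σ,ε}` for all `x, y`, then `f = g`. -/
theorem statement8 {K V : Type*} [DivisionRing K] [AddCommGroup V] [Module Kᵐᵒᵖ V]
    (σ : K → K) (ε : K) (h : IsAdmissiblePair σ ε)
    (hne : {r : K | ∃ t : K, r = t - σ t * ε} ≠ Set.univ)
    (f g : V → V → K) (hf : IsSesquilinear σ ε f) (hg : IsSesquilinear σ ε g)
    (hfg : ∀ x y : V, f x y - g x y ∈ {r : K | ∃ t : K, r = t - σ t * ε}) :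
    f = g := by
  funext x y
  by_contra hxy
  have hc : f x y - g x y ≠ 0 := sub_ne_zero.mpr hxy
  apply hne
  ext r
  simp only [Set.mem_univ, iff_true]
  have := hfg x (MulOpposite.op ((f x y - g x y)⁻¹ * r) • y)
  rw [hf.2.2.1, hg.2.2.1] at this
  have hr : f x y * ((f x y - g x y)⁻¹ * r) - g x y * ((f x y - g x y)⁻¹ * r) = r := by
    rw [← sub_mul, ← mul_assoc, mul_inv_cancel₀ hc, one_mul]
  rwa [hr] at this
end

section
/- Let (σ, ε) and (ρ, η) be admissible pairs for a division ring K with ε, η ∈ {1, −1}, and let c₁, c₂ ∈ K \ {0}. Suppose that for all s, t ∈ K one has s + σ(t)·ε = 0 if and only if c₁·s + ρ(t)·ρ(c₂)·η = 0. Then ρ(t) = ρ(c₂)·σ(t)·ρ(c₂)⁻¹ for every t ∈ K, and ρ(c₂) = σ(c₂). -/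
/-- With `ε, η ∈ {1, -1}`, if `s + σ t * ε = 0 ↔ c₁ * s + ρ t * ρ c₂ * η = 0` for
all `s, t`, then `ρ t = ρ c₂ * σ t * (ρ c₂)⁻¹` for every `t`, and `ρ c₂ = σ c₂`. -/
theorem statement13 {K : Type*} [DivisionRing K]
    (σ : K → K) (ε : K) (hσ : IsAdmissiblePair σ ε)
    (ρ : K → K) (η : K) (hρ : IsAdmissiblePair ρ η)
    (hε : ε = 1 ∨ ε = -1) (hη : η = 1 ∨ η = -1)
    (c₁ c₂ : K) (hc₁ : c₁ ≠ 0) (hc₂ : c₂ ≠ 0)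
    (hiff : ∀ s t : K, s + σ t * ε = 0 ↔ c₁ * s + ρ t * ρ c₂ * η = 0) :
    (∀ t : K, ρ t = ρ c₂ * σ t * (ρ c₂)⁻¹) ∧ ρ c₂ = σ c₂ := by
  obtain ⟨⟨hρb, hρadd, hρmul, hρ1⟩, -, -, -⟩ := hρ
  obtain ⟨⟨hσb, hσadd, hσmul, hσ1⟩, -, -, -⟩ := hσ
  have hρ0 : ρ 0 = 0 := by
    have h := hρadd 0 0
    simp only [add_zero] at h
    exact (left_eq_add.mp h)
  have hρc₂ : ρ c₂ ≠ 0 := fun h => hc₂ (hρb.1 (h.trans hρ0.symm))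
  have key : ∀ t : K, ρ t * ρ c₂ * η = c₁ * (σ t * ε) := by
    intro t
    have h := (hiff (-(σ t * ε)) t).mp (neg_add_cancel _)
    rw [mul_neg, neg_add_eq_zero] at h
    exact h.symm
  have key1 : ρ c₂ * η = c₁ * ε := by
    have h := key 1
    rwa [hσ1, hρ1, one_mul, one_mul] at h
  have hmain : ∀ t : K, ρ t * ρ c₂ = ρ c₂ * σ t := by
    intro t
    have h := key t
    rcases hε with rfl | rfl <;> rcases hη with rfl | rfl
    · simp only [mul_one] at h key1
      rw [h, key1]
    · simp only [mul_one, mul_neg_one] at h key1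
      rw [← key1, neg_mul] at h
      exact neg_injective h
    · simp only [mul_one, mul_neg_one, mul_neg] at h key1
      rw [h, key1, neg_mul]
    · simp only [mul_neg_one, mul_neg, mul_one] at h key1
      rw [neg_injective h, neg_injective key1]
  refine ⟨fun t => ?_, ?_⟩
  · rw [← hmain t, mul_assoc, mul_inv_cancel₀ hρc₂, mul_one]
  · exact mul_left_cancel₀ hρc₂ (hmain c₂)
end

section
/- Let K be a division ring, σ and ρ anti-automorphisms of K, and c₁, c₂ ∈ K \ {0}. Suppose that for all s, t ∈ K one has 1 + σ(t)·s = 0 if and only if c₁ + ρ(t)·c₂·s = 0. Then c₁·σ(t) = ρ(t)·c₂ for every t ∈ K, and in particular c₁ = c₂. -/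
/-- If `1 + σ t * s = 0 ↔ c₁ + ρ t * c₂ * s = 0` for all `s, t`, then
`c₁ * σ t = ρ t * c₂` for every `t`; in particular `c₁ = c₂`. -/
theorem statement14 {K : Type*} [DivisionRing K]
    (σ : K → K) (hσ : IsAntiAuto σ)
    (ρ : K → K) (hρ : IsAntiAuto ρ)
    (c₁ c₂ : K) (hc₁ : c₁ ≠ 0) (hc₂ : c₂ ≠ 0)
    (hiff : ∀ s t : K, 1 + σ t * s = 0 ↔ c₁ + ρ t * c₂ * s = 0) :
    (∀ t : K, c₁ * σ t = ρ t * c₂) ∧ c₁ = c₂ := by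
  obtain ⟨hσbij, hσadd, hσmul, hσ1⟩ := hσ
  obtain ⟨hρbij, hρadd, hρmul, hρ1⟩ := hρ
  have hσ0 : σ 0 = 0 := by
    have h := hσadd 0 0
    simp only [add_zero] at h
    exact (left_eq_add.mp h)
  have hρ0 : ρ 0 = 0 := by
    have h := hρadd 0 0
    simp only [add_zero] at h
    exact (left_eq_add.mp h)
  have key : ∀ t : K, c₁ * σ t = ρ t * c₂ := by
    intro t
    by_cases ht : t = 0
    · simp [ht, hσ0, hρ0]
    · have hσt : σ t ≠ 0 := fun h => ht (hσbij.1 (h.trans hσ0.symm))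
      have h1 : 1 + σ t * (-(σ t)⁻¹) = 0 := by
        rw [mul_neg, mul_inv_cancel₀ hσt, add_neg_cancel]
      have h2 := (hiff (-(σ t)⁻¹) t).mp h1
      -- c₁ + ρ t * c₂ * (-(σ t)⁻¹) = 0
      have h3 : c₁ = ρ t * c₂ * (σ t)⁻¹ := by
        have := h2
        rw [mul_neg] at this
        rw [← sub_eq_add_neg] at this
        exact sub_eq_zero.mp this
      calc c₁ * σ t = ρ t * c₂ * (σ t)⁻¹ * σ t := by rw [h3]
        _ = ρ t * c₂ := by rw [mul_assoc, inv_mul_cancel₀ hσt, mul_one]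
  refine ⟨key, ?_⟩
  have := key 1
  rw [hσ1, hρ1, mul_one, one_mul] at this
  exact this
end

section
/- Let (σ, ε) and (ρ, η) be admissible pairs for a division ring K with ε, η ∈ {1, −1}, and let c₁, c₂ ∈ K \ {0}. Suppose that for all s, t ∈ K: (i) s + σ(t)·ε = 0 if and only if c₁·s + ρ(t)·ρ(c₂)·η = 0, and (ii) 1 + σ(t)·s = 0 if and only if c₁ + ρ(t)·c₂·s = 0. Then c₁ = c₂ =: c, and c satisfies σ(c) = ρ(c) = c·ε·η⁻¹, ρ(t) = c·σ(t)·c⁻¹ for every t ∈ K, and c·σ(c)⁻¹·ε = η. -/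
/-- With `ε, η ∈ {1, -1}`, if both orthogonality equivalences (i) and (ii) hold, then
`c₁ = c₂ =: c`, and `σ c = ρ c = c * ε * η⁻¹`, `ρ t = c * σ t * c⁻¹` for every `t`,
and `c * (σ c)⁻¹ * ε = η`. -/
theorem statement15 {K : Type*} [DivisionRing K]
    (σ : K → K) (ε : K) (hσ : IsAdmissiblePair σ ε)
    (ρ : K → K) (η : K) (hρ : IsAdmissiblePair ρ η)
    (hε : ε = 1 ∨ ε = -1) (hη : η = 1 ∨ η = -1)
    (c₁ c₂ : K) (hc₁ : c₁ ≠ 0) (hc₂ : c₂ ≠ 0)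
    (hiff1 : ∀ s t : K, s + σ t * ε = 0 ↔ c₁ * s + ρ t * ρ c₂ * η = 0)
    (hiff2 : ∀ s t : K, 1 + σ t * s = 0 ↔ c₁ + ρ t * c₂ * s = 0) :
    c₁ = c₂ ∧ σ c₁ = ρ c₁ ∧ ρ c₁ = c₁ * ε * η⁻¹ ∧
      (∀ t : K, ρ t = c₁ * σ t * c₁⁻¹) ∧ c₁ * (σ c₁)⁻¹ * ε = η := by
  obtain ⟨⟨σbij, σadd, σmul, σone⟩, hεne, hσε, hσσ⟩ := hσ
  obtain ⟨⟨ρbij, ρadd, ρmul, ρone⟩, hηne, hρη, hρρ⟩ := hρ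
  have hε2 : ε * ε = 1 := by rcases hε with h | h <;> simp [h]
  have hη2 : η * η = 1 := by rcases hη with h | h <;> simp [h]
  have hεc : ∀ x : K, x * ε = ε * x := by
    rcases hε with h | h <;> intro x <;> simp [h]
  have hηc : ∀ x : K, x * η = η * x := by
    rcases hη with h | h <;> intro x <;> simp [h]
  have hεi : ε⁻¹ = ε := by rcases hε with h | h <;> simp [h, inv_neg]
  have hηi : η⁻¹ = η := by rcases hη with h | h <;> simp [h, inv_neg]
  have σ0 : σ 0 = 0 := by
    have h := σadd 0 0
    rw [add_zero] at h
    exact (left_eq_add.mp h)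
  have ρ0 : ρ 0 = 0 := by
    have h := ρadd 0 0
    rw [add_zero] at h
    exact (left_eq_add.mp h)
  -- key1 : from (i)
  have key1 : ∀ t : K, ρ t * ρ c₂ * η = c₁ * (σ t * ε) := by
    intro t
    have h := (hiff1 (-(σ t * ε)) t).mp (by simp)
    rw [mul_neg, neg_add_eq_zero] at h
    exact h.symm
  have hρc₂ne : ρ c₂ ≠ 0 := fun h => hc₂ (ρbij.1 (h.trans ρ0.symm))
  have hρc₂val : ρ c₂ = c₁ * ε * η := by
    have h := key1 1
    rw [σone, ρone, one_mul, one_mul] at h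
    refine mul_right_cancel₀ hηne ?_
    rw [h, mul_assoc (c₁ * ε), hη2, mul_one]
  -- ρ t = c₁ * σ t * c₁⁻¹
  have hρform : ∀ t : K, ρ t = c₁ * σ t * c₁⁻¹ := by
    intro t
    have h := key1 t
    rw [hρc₂val] at h
    have h2 : ρ t * c₁ = c₁ * σ t := by
      refine mul_right_cancel₀ hεne ?_
      have h3 : ρ t * c₁ * ε = ρ t * (c₁ * ε * η) * η := by
        rw [mul_assoc (ρ t) c₁ ε, mul_assoc (ρ t) (c₁ * ε * η) η,
          mul_assoc (c₁ * ε) η η, hη2, mul_one]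
      rw [h3, h, mul_assoc]
    rw [← h2, mul_assoc, mul_inv_cancel₀ hc₁, mul_one]
  -- key2 : from (ii)
  have key2 : ∀ t : K, ρ t * c₂ = c₁ * σ t := by
    intro t
    by_cases ht : t = 0
    · subst ht; rw [σ0, ρ0, zero_mul, mul_zero]
    · have hσt : σ t ≠ 0 := fun h => ht (σbij.1 (h.trans σ0.symm))
      have h := (hiff2 (-(σ t)⁻¹) t).mp
        (by rw [mul_neg, mul_inv_cancel₀ hσt, add_neg_cancel])
      rw [mul_neg, add_neg_eq_zero] at h
      have := congrArg (· * σ t) h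
      rw [mul_assoc (ρ t * c₂), inv_mul_cancel₀ hσt, mul_one] at this
      exact this.symm
  have hceq : c₂ = c₁ := by
    have h := key2 1
    rwa [σone, ρone, one_mul, mul_one] at h
  subst hceq
  have hρc₁ : ρ c₂ = c₂ * ε * η⁻¹ := by rw [hηi]; exact hρc₂val
  have hσc₁ : σ c₂ = c₂ * ε * η := by
    have h := hρform c₂
    rw [hρc₂val] at h
    have h2 : c₂ * σ c₂ = c₂ * ε * η * c₂ := by
      have := congrArg (· * c₂) h
      rw [mul_assoc (c₂ * σ c₂), inv_mul_cancel₀ hc₁, mul_one] at this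
      exact this.symm
    have h3 : σ c₂ = ε * η * c₂ := by
      have := mul_left_cancel₀ hc₁ (h2.trans (by rw [mul_assoc (c₂ * ε), mul_assoc]))
      rwa [← mul_assoc] at this
    rw [h3, mul_assoc, ← hηc, ← mul_assoc, ← hεc, mul_assoc, hηc, ← mul_assoc]
  refine ⟨rfl, ?_, hρc₁, hρform, ?_⟩
  · rw [hσc₁, hρc₁, hηi]
  · rcases hε with rfl | rfl <;> rcases hη with rfl | rfl <;>
      simp [hσc₁, inv_neg, mul_inv_cancel₀ hc₁]
end

section
/- Let (σ, ε) and (ρ, η) be admissible pairs for a division ring K with ε, η ∈ {1, −1}, and let V be a 4-dimensional right K-vector space with basis e₁, e₂, f₁, f₂. Let φ be a (σ, ε)-sesquilinear form and ψ a (ρ, η)-sesquilinear form on V. Assume: φ(e₁, f₁) = φ(e₂, f₂) = 1; φ vanishes on each of the pairs (e₁,e₁), (e₂,e₂), (f₁,f₁), (f₂,f₂), (e₁,e₂), (f₁,f₂), (e₁,f₂), (e₂,f₁); and, setting 𝒬 to be the union of the K-spans ⟨e₁,e₂⟩ ∪ ⟨f₁,f₂⟩ ∪ ⟨e₁,f₂⟩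 ∪ ⟨f₁,e₂⟩, one has φ(x, y) = 0 if and only if ψ(x, y) = 0 for all x, y ∈ 𝒬. Then c := ψ(e₁, f₁) is nonzero and ψ = c·φ, i.e. ψ(x, y) = c·φ(x, y) for all x, y ∈ V; moreover ρ(t) = c·σ(t)·c⁻¹ for all t ∈ K and c·σ(c)⁻¹·ε = η. -/
/-- Two sesquilinear forms on a rank-`2` "frame" subspace defining the same
orthogonality relation on the quadric set `𝒬` are proportional. -/
theorem statement16 {K V : Type*} [DivisionRing K] [AddCommGroup V] [Module Kᵐᵒᵖ V]
    (σ : K → K) (ε : K) (hσ : IsAdmissiblePair σ ε)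
    (ρ : K → K) (η : K) (hρ : IsAdmissiblePair ρ η)
    (e₁ e₂ f₁ f₂ : V) (b : Module.Basis (Fin 4) Kᵐᵒᵖ V) (hb : ⇑b = ![e₁, e₂, f₁, f₂])
    (φ ψ : V → V → K)
    (hφ : IsSesquilinear σ ε φ) (hψ : IsSesquilinear ρ η ψ)
    (h11 : φ e₁ f₁ = 1) (h22 : φ e₂ f₂ = 1)
    (z1 : φ e₁ e₁ = 0) (z2 : φ e₂ e₂ = 0) (z3 : φ f₁ f₁ = 0) (z4 : φ f₂ f₂ = 0)
    (z5 : φ e₁ e₂ = 0) (z6 : φ f₁ f₂ = 0) (z7 : φ e₁ f₂ = 0) (z8 : φ e₂ f₁ = 0)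
    (horth : ∀ x ∈ (((Submodule.span Kᵐᵒᵖ {e₁, e₂} : Submodule Kᵐᵒᵖ V) : Set V) ∪
        ((Submodule.span Kᵐᵒᵖ {f₁, f₂} : Submodule Kᵐᵒᵖ V) : Set V) ∪
        ((Submodule.span Kᵐᵒᵖ {e₁, f₂} : Submodule Kᵐᵒᵖ V) : Set V) ∪
        ((Submodule.span Kᵐᵒᵖ {f₁, e₂} : Submodule Kᵐᵒᵖ V) : Set V)),
      ∀ y ∈ (((Submodule.span Kᵐᵒᵖ {e₁, e₂} : Submodule Kᵐᵒᵖ V) : Set V) ∪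
        ((Submodule.span Kᵐᵒᵖ {f₁, f₂} : Submodule Kᵐᵒᵖ V) : Set V) ∪
        ((Submodule.span Kᵐᵒᵖ {e₁, f₂} : Submodule Kᵐᵒᵖ V) : Set V) ∪
        ((Submodule.span Kᵐᵒᵖ {f₁, e₂} : Submodule Kᵐᵒᵖ V) : Set V)),
      (φ x y = 0 ↔ ψ x y = 0)) :
    ψ e₁ f₁ ≠ 0 ∧ (∀ x y : V, ψ x y = ψ e₁ f₁ * φ x y) ∧
      (∀ t : K, ρ t = ψ e₁ f₁ * σ t * (ψ e₁ f₁)⁻¹) ∧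
      ψ e₁ f₁ * (σ (ψ e₁ f₁))⁻¹ * ε = η := by

  obtain ⟨⟨σbij, σadd, σmul, σone⟩, hε0, hσε, hσσ⟩ := hσ
  obtain ⟨⟨ρbij, ρadd, ρmul, ρone⟩, hη0, hρη, hρρ⟩ := hρ
  obtain ⟨φa1, φa2, φsr, φrefl⟩ := hφ
  obtain ⟨ψa1, ψa2, ψsr, ψrefl⟩ := hψ
  have σ0 : σ 0 = 0 := by
    have h := σadd 0 0
    simp only [add_zero] at h
    exact (left_eq_add.mp h)
  have ρ0 : ρ 0 = 0 := by
    have h := ρadd 0 0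
    simp only [add_zero] at h
    exact (left_eq_add.mp h)
  -- left scalar laws
  have φl : ∀ (s : K) (x y : V), φ (MulOpposite.op s • x) y = σ s * φ x y := by
    intro s x y
    rw [φrefl y (MulOpposite.op s • x), φsr, σmul, mul_assoc, ← φrefl y x]
  have ψl : ∀ (s : K) (x y : V), ψ (MulOpposite.op s • x) y = ρ s * ψ x y := by
    intro s x y
    rw [ψrefl y (MulOpposite.op s • x), ψsr, ρmul, mul_assoc, ← ψrefl y x]
  have φz2 : ∀ x : V, φ x 0 = 0 := by
    intro x
    have h := φa2 x 0 0
    simp only [add_zero] at h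
    exact (left_eq_add.mp h)
  have φz1 : ∀ y : V, φ 0 y = 0 := by
    intro y
    have h := φa1 0 0 y
    simp only [add_zero] at h
    exact (left_eq_add.mp h)
  have ψz2 : ∀ x : V, ψ x 0 = 0 := by
    intro x
    have h := ψa2 x 0 0
    simp only [add_zero] at h
    exact (left_eq_add.mp h)
  have ψz1 : ∀ y : V, ψ 0 y = 0 := by
    intro y
    have h := ψa1 0 0 y
    simp only [add_zero] at h
    exact (left_eq_add.mp h)
  -- reflected φ values
  have w1 : φ f₁ e₁ = ε := by rw [φrefl e₁ f₁, h11, σone, one_mul]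
  have w2 : φ f₂ e₂ = ε := by rw [φrefl e₂ f₂, h22, σone, one_mul]
  have w3 : φ e₂ e₁ = 0 := by rw [φrefl e₁ e₂, z5, σ0, zero_mul]
  have w4 : φ f₂ f₁ = 0 := by rw [φrefl f₁ f₂, z6, σ0, zero_mul]
  have w5 : φ f₂ e₁ = 0 := by rw [φrefl e₁ f₂, z7, σ0, zero_mul]
  have w6 : φ f₁ e₂ = 0 := by rw [φrefl e₂ f₁, z8, σ0, zero_mul]
  -- membership machinery
  have memQ : ∀ v : V,
      (v ∈ Submodule.span Kᵐᵒᵖ ({e₁, e₂} : Set V) ∨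
       v ∈ Submodule.span Kᵐᵒᵖ ({f₁, f₂} : Set V) ∨
       v ∈ Submodule.span Kᵐᵒᵖ ({e₁, f₂} : Set V) ∨
       v ∈ Submodule.span Kᵐᵒᵖ ({f₁, e₂} : Set V)) →
      v ∈ (((Submodule.span Kᵐᵒᵖ {e₁, e₂} : Submodule Kᵐᵒᵖ V) : Set V) ∪
        ((Submodule.span Kᵐᵒᵖ {f₁, f₂} : Submodule Kᵐᵒᵖ V) : Set V) ∪
        ((Submodule.span Kᵐᵒᵖ {e₁, f₂} : Submodule Kᵐᵒᵖ V) : Set V) ∪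
        ((Submodule.span Kᵐᵒᵖ {f₁, e₂} : Submodule Kᵐᵒᵖ V) : Set V)) := by
    intro v hv
    simp only [Set.mem_union, SetLike.mem_coe]
    tauto
  have me₁ : e₁ ∈ Submodule.span Kᵐᵒᵖ ({e₁, e₂} : Set V) :=
    Submodule.subset_span (by simp)
  have me₂ : e₂ ∈ Submodule.span Kᵐᵒᵖ ({e₁, e₂} : Set V) :=
    Submodule.subset_span (by simp)
  have mf₁ : f₁ ∈ Submodule.span Kᵐᵒᵖ ({f₁, f₂} : Set V) :=
    Submodule.subset_span (by simp)
  have mf₂ : f₂ ∈ Submodule.span Kᵐᵒᵖ ({f₁, f₂} : Set V) :=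
    Submodule.subset_span (by simp)
  have Qe₁ := memQ e₁ (Or.inl me₁)
  have Qe₂ := memQ e₂ (Or.inl me₂)
  have Qf₁ := memQ f₁ (Or.inr (Or.inl mf₁))
  have Qf₂ := memQ f₂ (Or.inr (Or.inl mf₂))
  -- ψ zeros and c ≠ 0
  have p1 : ψ e₁ e₁ = 0 := (horth e₁ Qe₁ e₁ Qe₁).mp z1
  have p2 : ψ e₂ e₂ = 0 := (horth e₂ Qe₂ e₂ Qe₂).mp z2
  have p3 : ψ f₁ f₁ = 0 := (horth f₁ Qf₁ f₁ Qf₁).mp z3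
  have p4 : ψ f₂ f₂ = 0 := (horth f₂ Qf₂ f₂ Qf₂).mp z4
  have p5 : ψ e₁ e₂ = 0 := (horth e₁ Qe₁ e₂ Qe₂).mp z5
  have p6 : ψ f₁ f₂ = 0 := (horth f₁ Qf₁ f₂ Qf₂).mp z6
  have p7 : ψ e₁ f₂ = 0 := (horth e₁ Qe₁ f₂ Qf₂).mp z7
  have p8 : ψ e₂ f₁ = 0 := (horth e₂ Qe₂ f₁ Qf₁).mp z8
  have q3 : ψ e₂ e₁ = 0 := by rw [ψrefl e₁ e₂, p5, ρ0, zero_mul]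
  have q4 : ψ f₂ f₁ = 0 := by rw [ψrefl f₁ f₂, p6, ρ0, zero_mul]
  have q5 : ψ f₂ e₁ = 0 := by rw [ψrefl e₁ f₂, p7, ρ0, zero_mul]
  have q6 : ψ f₁ e₂ = 0 := by rw [ψrefl e₂ f₁, p8, ρ0, zero_mul]
  have hc0 : ψ e₁ f₁ ≠ 0 := by
    intro h
    have := (horth e₁ Qe₁ f₁ Qf₁).mpr h
    rw [h11] at this
    exact one_ne_zero this
  set c := ψ e₁ f₁ with hc
  -- d = c
  have hd : ψ e₂ f₂ = c := by
    have hx : (e₁ + e₂) ∈ Submodule.span Kᵐᵒᵖ ({e₁, e₂} : Set V) :=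
      Submodule.add_mem _ me₁ me₂
    have hy : (MulOpposite.op (-1 : K) • f₁ + f₂) ∈
        Submodule.span Kᵐᵒᵖ ({f₁, f₂} : Set V) :=
      Submodule.add_mem _ (Submodule.smul_mem _ _ mf₁) mf₂
    have hφ0 : φ (e₁ + e₂) (MulOpposite.op (-1 : K) • f₁ + f₂) = 0 := by
      rw [φa1, φa2, φa2, φsr, φsr, h11, h22, z7, z8]
      noncomm_ring
    have := (horth _ (memQ _ (Or.inl hx)) _ (memQ _ (Or.inr (Or.inl hy)))).mp hφ0
    rw [ψa1, ψa2, ψa2, ψsr, ψsr, p7, p8] at this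
    have h2 : -c + ψ e₂ f₂ = 0 := by
      rw [← hc] at this
      linear_combination (norm := noncomm_ring) this
    linear_combination (norm := noncomm_ring) h2
  -- ρ(c) * η = c * ε
  have hρc : ρ c * η = c * ε := by
    have hx : (e₁ + f₂) ∈ Submodule.span Kᵐᵒᵖ ({e₁, f₂} : Set V) :=
      Submodule.add_mem _ (Submodule.subset_span (by simp))
        (Submodule.subset_span (by simp))
    have hy : (e₂ + MulOpposite.op (-ε) • f₁) ∈
        Submodule.span Kᵐᵒᵖ ({f₁, e₂} : Set V) :=
      Submodule.add_mem _ (Submodule.subset_span (by simp))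
        (Submodule.smul_mem _ _ (Submodule.subset_span (by simp)))
    have hφ0 : φ (e₁ + f₂) (e₂ + MulOpposite.op (-ε) • f₁) = 0 := by
      rw [φa1, φa2, φa2, φsr, φsr, h11, z5, w2, w4]
      noncomm_ring
    have hψ0 := (horth _ (memQ _ (Or.inr (Or.inr (Or.inl hx)))) _
      (memQ _ (Or.inr (Or.inr (Or.inr hy))))).mp hφ0
    rw [ψa1, ψa2, ψa2, ψsr, ψsr, p5, q4, ← hc] at hψ0
    have hfe : ψ f₂ e₂ = ρ c * η := by rw [ψrefl e₂ f₂, hd]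
    rw [hfe] at hψ0
    linear_combination (norm := noncomm_ring) hψ0
  -- the ρ formula
  have hρform : ∀ t : K, ρ t = c * σ t * c⁻¹ := by
    intro s
    have hx : (MulOpposite.op s • e₁ + f₂) ∈
        Submodule.span Kᵐᵒᵖ ({e₁, f₂} : Set V) :=
      Submodule.add_mem _ (Submodule.smul_mem _ _ (Submodule.subset_span (by simp)))
        (Submodule.subset_span (by simp))
    have hy : (f₁ + MulOpposite.op (-(ε⁻¹ * σ s)) • e₂) ∈
        Submodule.span Kᵐᵒᵖ ({f₁, e₂} : Set V) :=
      Submodule.add_mem _ (Submodule.subset_span (by simp))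
        (Submodule.smul_mem _ _ (Submodule.subset_span (by simp)))
    have hφ0 : φ (MulOpposite.op s • e₁ + f₂)
        (f₁ + MulOpposite.op (-(ε⁻¹ * σ s)) • e₂) = 0 := by
      rw [φa2, φa1, φa1, φsr, φsr, φl, φl, h11, z5, w2, w4]
      have h4 : ε * -(ε⁻¹ * σ s) = -σ s := by
        rw [mul_neg, ← mul_assoc, mul_inv_cancel₀ hε0, one_mul]
      rw [h4]
      noncomm_ring
    have hψ0 := (horth _ (memQ _ (Or.inr (Or.inr (Or.inl hx)))) _
      (memQ _ (Or.inr (Or.inr (Or.inr hy))))).mp hφ0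
    have hfe : ψ f₂ e₂ = c * ε := by rw [ψrefl e₂ f₂, hd, hρc]
    rw [ψa2, ψa1, ψa1, ψsr, ψsr, ψl, ψl, p5, q4, hfe, ← hc] at hψ0
    have h2 : ρ s * c = c * σ s := by
      have h3 : c * ε * -(ε⁻¹ * σ s) = -(c * σ s) := by
        rw [mul_neg, mul_assoc, ← mul_assoc ε, mul_inv_cancel₀ hε0, one_mul]
      simp only [mul_zero, zero_mul, add_zero, zero_add, mul_one] at hψ0
      rw [h3] at hψ0
      linear_combination (norm := noncomm_ring) hψ0
    rw [← h2, mul_assoc, mul_inv_cancel₀ hc0, mul_one]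
  -- η formula
  have hσc0 : σ c ≠ 0 := by
    intro h
    apply hc0
    have := σbij.injective (h.trans σ0.symm)
    exact this
  have hη : c * (σ c)⁻¹ * ε = η := by
    have h1 : c * σ c * c⁻¹ * η = c * ε := by rw [← hρform c]; exact hρc
    have h2 : η = c * (σ c)⁻¹ * ε := by
      have : (c * σ c * c⁻¹)⁻¹ * (c * σ c * c⁻¹ * η) = (c * σ c * c⁻¹)⁻¹ * (c * ε) := by
        rw [h1]
      rw [← mul_assoc, inv_mul_cancel₀ (by
        apply mul_ne_zero (mul_ne_zero hc0 hσc0) (inv_ne_zero hc0)), one_mul] at this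
      rw [this, mul_inv_rev, mul_inv_rev, inv_inv]
      have h4 : (σ c)⁻¹ * c⁻¹ * (c * ε) = (σ c)⁻¹ * ε := by
        rw [mul_assoc, ← mul_assoc c⁻¹, inv_mul_cancel₀ hc0, one_mul]
      rw [mul_assoc c ((σ c)⁻¹ * c⁻¹), h4, ← mul_assoc]
    exact h2.symm
  -- proportionality on all of V
  have hspan : ∀ v : V, v ∈ Submodule.span Kᵐᵒᵖ (Set.range ⇑b) := by
    rw [b.span_eq]; intro v; trivial
  have base : ∀ i j : Fin 4, ψ (b i) (b j) = c * φ (b i) (b j) := by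
    have hf₁e₁ : ψ f₁ e₁ = c * ε := by rw [ψrefl e₁ f₁, ← hc, hρc]
    have hf₂e₂ : ψ f₂ e₂ = c * ε := by rw [ψrefl e₂ f₂, hd, hρc]
    intro i j
    fin_cases i <;> fin_cases j <;>
      simp [hb, p1, p2, p3, p4, p5, p6, p7, p8, q3, q4, q5, q6, hd, hf₁e₁, hf₂e₂,
        h11, h22, z1, z2, z3, z4, z5, z6, z7, z8, w1, w2, w3, w4, w5, w6, ← hc]
  have step1 : ∀ x : V, (∀ j : Fin 4, ψ x (b j) = c * φ x (b j)) →
      ∀ y : V, ψ x y = c * φ x y := by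
    intro x hx y
    induction hspan y using Submodule.span_induction with
    | mem v hv => obtain ⟨j, rfl⟩ := hv; exact hx j
    | zero => rw [ψz2, φz2, mul_zero]
    | add u v _ _ ihu ihv => rw [ψa2, φa2, ihu, ihv, mul_add]
    | smul a u _ ih =>
      rw [← MulOpposite.op_unop a, ψsr, φsr, ih, mul_assoc]
  have main : ∀ x y : V, ψ x y = c * φ x y := by
    intro x y
    induction hspan x using Submodule.span_induction with
    | mem v hv =>
      obtain ⟨i, rfl⟩ := hv
      exact step1 (b i) (fun j => base i j) y
    | zero => rw [ψz1, φz1, mul_zero]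
    | add u v _ _ ihu ihv => rw [ψa1, φa1, ihu, ihv, mul_add]
    | smul a u _ ih =>
      rw [← MulOpposite.op_unop a, ψl, φl, ih, hρform]
      rw [mul_assoc (c * σ (MulOpposite.unop a)), ← mul_assoc c⁻¹,
        inv_mul_cancel₀ hc0, one_mul, mul_assoc]
  exact ⟨hc0, main, hρform, hη⟩
end
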